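/- arXiv:1306.4009 — 11 statements merged into one kernel-verified Lean document; each statement's English description precedes it below -/
import Mathlib

section
/- Let d > 0, let v > 0 be a noise variance, and let N ≥ 1. Index 4-PAM symbols by Fin 4 with points s_i = (2·i − 3)·d. Let x, x̂ : Fin N → Fin 4 be two distinct symbol sequences. Let P = Measure.pi (fun _ : Fin N => gaussianReal 0 v) be the law of the i.i.d. Gaussian noise vector z. Then P.real { z | Σ_k ( 2·(s_{x k} − s_{x̂ k})·(s_{x k} + z k) + s_{x̂ k}² − s_{x k}² ) < 0 } = Q( (Σ_k (s_{x k} − s_{x̂ k})²) / √(Σ_k 4·(s_{x k} − s_{x̂ k})²·v) ), and this argument equals d·√(Σ_k ((x k : ℝ) − (x̂ k : ℝ))²)/√v. (This is the exact pairwise error probability of the maximum-likelihood symbol-wise decoder over the AWGN channel.) -/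
open MeasureTheory ProbabilityTheory Real Finset
open scoped ENNReal NNReal

lemma pdf_key (m₁ m₂ : ℝ) {v₁ v₂ : NNReal} (h₁ : v₁ ≠ 0) (h₂ : v₂ ≠ 0) (t x : ℝ) :
    gaussianPDFReal m₁ v₁ x * gaussianPDFReal m₂ v₂ (t - x)
      = gaussianPDFReal (m₁ + m₂) (v₁ + v₂) t *
        gaussianPDFReal (m₁ + v₁ * (t - m₁ - m₂) / (v₁ + v₂))
          ⟨(v₁ : ℝ) * v₂ / (v₁ + v₂), by positivity⟩ x := by
  have ha : (0:ℝ) < v₁ := lt_of_le_of_ne v₁.coe_nonneg (by exact_mod_cast (Ne.symm h₁))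
  have hb : (0:ℝ) < v₂ := lt_of_le_of_ne v₂.coe_nonneg (by exact_mod_cast (Ne.symm h₂))
  set a : ℝ := (v₁ : ℝ) with hav
  set b : ℝ := (v₂ : ℝ) with hbv
  have hab : (0:ℝ) < a + b := by positivity
  simp only [gaussianPDFReal, NNReal.coe_mk, NNReal.coe_add, ← hav, ← hbv]
  have hC : Real.sqrt (2*π*a) * Real.sqrt (2*π*b)
      = Real.sqrt (2*π*(a+b)) * Real.sqrt (2*π*(a*b/(a+b))) := by
    rw [← Real.sqrt_mul (by positivity), ← Real.sqrt_mul (by positivity)]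
    congr 1
    field_simp
  have hE : -(x - m₁)^2/(2*a) + (-((t - x) - m₂)^2/(2*b))
      = -(t - (m₁+m₂))^2/(2*(a+b)) + (-(x - (m₁ + a*(t-m₁-m₂)/(a+b)))^2/(2*(a*b/(a+b)))) := by
    field_simp
    ring
  calc (√(2*π*a))⁻¹ * rexp (-(x - m₁)^2/(2*a)) * ((√(2*π*b))⁻¹ * rexp (-((t-x) - m₂)^2/(2*b)))
      = (√(2*π*a) * √(2*π*b))⁻¹ * rexp (-(x - m₁)^2/(2*a) + (-((t-x) - m₂)^2/(2*b))) := by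
        rw [mul_inv, Real.exp_add]; ring
    _ = (√(2*π*(a+b)) * √(2*π*(a*b/(a+b))))⁻¹ *
          rexp (-(t - (m₁+m₂))^2/(2*(a+b)) + (-(x - (m₁ + a*(t-m₁-m₂)/(a+b)))^2/(2*(a*b/(a+b))))) := by
        rw [hC, hE]
    _ = _ := by rw [mul_inv, Real.exp_add]; erw [NNReal.coe_mk]; ring

lemma pdf_conv (m₁ m₂ : ℝ) {v₁ v₂ : NNReal} (h₁ : v₁ ≠ 0) (h₂ : v₂ ≠ 0) (t : ℝ) :
    ∫ x, gaussianPDFReal m₁ v₁ x * gaussianPDFReal m₂ v₂ (t - x)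
      = gaussianPDFReal (m₁ + m₂) (v₁ + v₂) t := by
  have ha : (0:ℝ) < v₁ := lt_of_le_of_ne v₁.coe_nonneg (by exact_mod_cast (Ne.symm h₁))
  have hab : (0:ℝ) < v₁ + v₂ := by positivity
  have hw : (⟨(v₁ : ℝ) * v₂ / (v₁ + v₂), by positivity⟩ : NNReal) ≠ 0 := by
    have hb : (0:ℝ) < v₂ := lt_of_le_of_ne v₂.coe_nonneg (by exact_mod_cast (Ne.symm h₂))
    intro h
    have := congrArg (NNReal.toReal) h
    change (v₁:ℝ) * v₂ / ((v₁:ℝ) + v₂) = 0 at this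
    have : (0:ℝ) < (v₁:ℝ) * v₂ / ((v₁:ℝ) + v₂) := by positivity
    simp_all
  simp_rw [pdf_key m₁ m₂ h₁ h₂ t]
  rw [integral_const_mul, integral_gaussianPDFReal_eq_one _ hw, mul_one]

lemma integrable_conv (m₁ m₂ : ℝ) {v₁ v₂ : NNReal} (h₁ : v₁ ≠ 0) (h₂ : v₂ ≠ 0) (t : ℝ) :
    Integrable (fun x => gaussianPDFReal m₁ v₁ x * gaussianPDFReal m₂ v₂ (t - x)) := by
  simp_rw [pdf_key m₁ m₂ h₁ h₂ t]
  exact (integrable_gaussianPDFReal _ _).const_mul _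

lemma gauss_conv (m₁ m₂ : ℝ) (v₁ v₂ : NNReal) :
    Measure.map (fun p : ℝ × ℝ => p.1 + p.2)
        ((gaussianReal m₁ v₁).prod (gaussianReal m₂ v₂))
      = gaussianReal (m₁ + m₂) (v₁ + v₂) := by
  by_cases h₁ : v₁ = 0
  · subst h₁
    rw [gaussianReal_zero_var, Measure.dirac_prod,
      Measure.map_map measurable_add measurable_prodMk_left]
    have : ((fun p : ℝ × ℝ => p.1 + p.2) ∘ Prod.mk m₁) = (m₁ + ·) := rfl
    rw [this, gaussianReal_map_const_add, add_comm m₂ m₁, zero_add]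
  by_cases h₂ : v₂ = 0
  · subst h₂
    rw [gaussianReal_zero_var, Measure.prod_dirac,
      Measure.map_map measurable_add measurable_prodMk_right]
    have : ((fun p : ℝ × ℝ => p.1 + p.2) ∘ (fun x => (x, m₂))) = (· + m₂) := rfl
    rw [this, gaussianReal_map_add_const, add_zero]
  · have h₁₂ : v₁ + v₂ ≠ 0 := by simp [h₁, h₂]
    ext s hs
    rw [Measure.map_apply measurable_add hs,
      gaussianReal_of_var_ne_zero _ h₁, gaussianReal_of_var_ne_zero _ h₂,
      gaussianReal_of_var_ne_zero _ h₁₂, withDensity_apply _ hs,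
      Measure.prod_apply (hs.preimage measurable_add)]
    set f := gaussianPDF m₁ v₁
    set g := gaussianPDF m₂ v₂
    have hg : Measurable g := measurable_gaussianPDF _ _
    have hf : Measurable f := measurable_gaussianPDF _ _
    have step1 : ∀ x : ℝ,
        (volume.withDensity g) (Prod.mk x ⁻¹' ((fun p : ℝ × ℝ => p.1 + p.2) ⁻¹' s))
          = ∫⁻ t in s, g (t - x) := by
      intro x
      have hset : MeasurableSet {y : ℝ | x + y ∈ s} := hs.preimage (measurable_const_add x)
      have : (Prod.mk x ⁻¹' ((fun p : ℝ × ℝ => p.1 + p.2) ⁻¹' s)) = {y : ℝ | x + y ∈ s} := rfl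
      rw [this, withDensity_apply _ hset, ← lintegral_indicator hset]
      have hpt : ∀ y : ℝ, {y : ℝ | x + y ∈ s}.indicator g y
          = s.indicator (fun t => g (t - x)) (x + y) := by
        intro y
        by_cases hy : x + y ∈ s
        · simp [Set.indicator_of_mem, hy, Set.mem_setOf_eq]
        · simp [Set.indicator_of_notMem, hy, Set.mem_setOf_eq]
      simp_rw [hpt]
      rw [lintegral_add_left_eq_self (s.indicator fun t => g (t - x)) x,
        lintegral_indicator hs]
    have hind : ∀ x : ℝ, (∫⁻ t in s, g (t - x))
        = ∫⁻ t, s.indicator (1 : ℝ → ℝ≥0∞) t * g (t - x) := by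
      intro x
      rw [← lintegral_indicator hs]
      refine lintegral_congr fun t => ?_
      by_cases ht : t ∈ s <;> simp [ht]
    have hmeas : Measurable fun x : ℝ => ∫⁻ t in s, g (t - x) := by
      simp_rw [hind]
      exact Measurable.lintegral_prod_right'
        (f := fun q : ℝ × ℝ => s.indicator (1 : ℝ → ℝ≥0∞) q.2 * g (q.2 - q.1))
        (((measurable_const.indicator hs).comp measurable_snd).mul
          (hg.comp (measurable_snd.sub measurable_fst)))
    simp_rw [step1]
    rw [lintegral_withDensity_eq_lintegral_mul _ hf hmeas]
    have hmul : ∀ x : ℝ, (f * fun x => ∫⁻ t in s, g (t - x)) x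
        = ∫⁻ t in s, f x * g (t - x) := fun x =>
      (lintegral_const_mul (f x) (hg.comp (measurable_id.sub_const x))).symm
    simp_rw [hmul]
    rw [lintegral_lintegral_swap]
    · refine lintegral_congr fun t => ?_
      have hofr : ∀ x : ℝ, f x * g (t - x)
          = ENNReal.ofReal (gaussianPDFReal m₁ v₁ x * gaussianPDFReal m₂ v₂ (t - x)) := by
        intro x
        rw [ENNReal.ofReal_mul (gaussianPDFReal_nonneg _ _ _)]
        rfl
      simp_rw [hofr]
      rw [← ofReal_integral_eq_lintegral_ofReal (integrable_conv m₁ m₂ h₁ h₂ t)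
        (Filter.Eventually.of_forall fun x => mul_nonneg (gaussianPDFReal_nonneg _ _ _)
          (gaussianPDFReal_nonneg _ _ _)),
        pdf_conv m₁ m₂ h₁ h₂ t]
      rfl
    · exact ((hf.comp measurable_fst).mul
        (hg.comp (measurable_snd.sub measurable_fst))).aemeasurable

lemma map_sum_gauss : ∀ (n : ℕ) (c : Fin n → ℝ) (v : NNReal) (V : NNReal),
    ((V : ℝ) = (∑ k, (c k)^2) * v) →
    Measure.map (fun z : Fin n → ℝ => ∑ k, c k * z k)
        (Measure.pi fun _ : Fin n => gaussianReal 0 v)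
      = gaussianReal 0 V := by
  intro n
  induction n with
  | zero =>
    intro c v V hV
    simp only [Finset.univ_eq_empty, Finset.sum_empty] at hV ⊢
    have hV0 : V = 0 := by ext; simpa using hV
    subst hV0
    rw [gaussianReal_zero_var]
    have : (fun z : Fin 0 → ℝ => (0:ℝ)) = fun _ => (0:ℝ) := rfl
    rw [Measure.map_const]
    simp
  | succ n ih =>
    intro c v V hV
    -- decompose the pi measure
    have hmp := (measurePreserving_piFinSuccAbove (fun _ : Fin (n+1) => gaussianReal 0 v) 0)
    set e := MeasurableEquiv.piFinSuccAbove (fun _ : Fin (n+1) => ℝ) 0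
    have hmap : Measure.map (fun z : Fin (n+1) → ℝ => ∑ k, c k * z k)
          (Measure.pi fun _ : Fin (n+1) => gaussianReal 0 v)
        = Measure.map ((fun z : Fin (n+1) → ℝ => ∑ k, c k * z k) ∘ e.symm)
          ((gaussianReal 0 v).prod (Measure.pi fun _ : Fin n => gaussianReal 0 v)) := by
      rw [← hmp.map_eq, Measure.map_map (by fun_prop) e.measurable]
      congr 1
      ext z
      simp [Function.comp]
    rw [hmap]
    have hcomp : ((fun z : Fin (n+1) → ℝ => ∑ k, c k * z k) ∘ e.symm)
        = fun p : ℝ × (Fin n → ℝ) => (c 0 * p.1) + ∑ j, c j.succ * p.2 j := by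
      ext p
      simp only [Function.comp_apply]
      rw [Fin.sum_univ_succ]
      have h0 : (e.symm p) 0 = p.1 := by
        simp [e, MeasurableEquiv.piFinSuccAbove]
      have hsucc : ∀ j : Fin n, (e.symm p) j.succ = p.2 j := by
        intro j
        have : (0 : Fin (n+1)).succAbove j = j.succ := by
          simp [Fin.succAbove]
        rw [← this]
        simp [e, MeasurableEquiv.piFinSuccAbove]
      rw [h0]
      simp_rw [hsucc]
    rw [hcomp]
    -- split into a sum of two independent parts
    set V' : NNReal := ⟨(∑ j : Fin n, (c j.succ)^2) * v, by positivity⟩ with hV'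
    have hIH : Measure.map (fun w : Fin n → ℝ => ∑ j, c j.succ * w j)
        (Measure.pi fun _ : Fin n => gaussianReal 0 v) = gaussianReal 0 V' := ih _ v V' rfl
    have h1 : Measure.map (fun a : ℝ => c 0 * a) (gaussianReal 0 v)
        = gaussianReal 0 (⟨(c 0)^2, sq_nonneg _⟩ * v) := by
      have := gaussianReal_map_const_mul (μ := 0) (v := v) (c 0)
      convert this using 3
      · simp
      · rfl
    have hprodmap : Measure.map (fun p : ℝ × (Fin n → ℝ) => (c 0 * p.1) + ∑ j, c j.succ * p.2 j)
        ((gaussianReal 0 v).prod (Measure.pi fun _ : Fin n => gaussianReal 0 v))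
        = Measure.map (fun q : ℝ × ℝ => q.1 + q.2)
          ((gaussianReal 0 (⟨(c 0)^2, sq_nonneg _⟩ * v)).prod (gaussianReal 0 V')) := by
      rw [← h1, ← hIH,
        Measure.map_prod_map _ _ (measurable_const_mul (c 0)) (by fun_prop),
        Measure.map_map measurable_add (Measurable.prodMap (measurable_const_mul (c 0)) (by fun_prop))]
      rfl
    rw [hprodmap, gauss_conv]
    congr 1
    · simp
    · ext
      push_cast
      rw [hV, Fin.sum_univ_succ]
      push_cast [hV']
      change c 0 ^ 2 * (v:ℝ) + (∑ x : Fin n, c x.succ ^ 2) * ↑v = _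
      ring

-- standard-normal facts
lemma g01_Ici_eq_Ioi (t : ℝ) :
    gaussianReal 0 1 (Set.Ici t) = gaussianReal 0 1 (Set.Ioi t) := by
  have h0 : gaussianReal 0 1 {t} = 0 :=
    gaussianReal_absolutelyContinuous 0 one_ne_zero (measure_singleton t)
  have : (Set.Ici t) = {t} ∪ Set.Ioi t := by
    rw [Set.singleton_union, Set.Ioi_insert]
  rw [this, measure_union (Set.disjoint_singleton_left.2 (by simp)) measurableSet_Ioi,
    h0, zero_add]

lemma g01_neg (u : ℝ) :
    gaussianReal 0 1 (Set.Iio (-u)) = gaussianReal 0 1 (Set.Ici u) := by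
  have hmap : Measure.map (fun y : ℝ => (-1 : ℝ) * y) (gaussianReal 0 1) = gaussianReal 0 1 := by
    rw [gaussianReal_map_const_mul (-1 : ℝ)]
    norm_num
  rw [g01_Ici_eq_Ioi]
  conv_lhs => rw [← hmap]
  rw [Measure.map_apply (measurable_const_mul _) measurableSet_Iio]
  congr 1
  ext y
  simp only [Set.mem_preimage, Set.mem_Iio, Set.mem_Ioi]
  constructor <;> intro h <;> nlinarith

lemma gauss_Iio (V : NNReal) (hV : V ≠ 0) (A : ℝ) :
    gaussianReal 0 V (Set.Iio (-A)) = gaussianReal 0 1 (Set.Ici (A / Real.sqrt V)) := by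
  have hVpos : (0:ℝ) < V := lt_of_le_of_ne V.coe_nonneg (by exact_mod_cast (Ne.symm hV))
  set σ : ℝ := Real.sqrt V with hσ
  have hσpos : 0 < σ := Real.sqrt_pos.2 hVpos
  have hmap : Measure.map (fun y : ℝ => σ * y) (gaussianReal 0 1) = gaussianReal 0 V := by
    rw [gaussianReal_map_const_mul σ, mul_zero]
    congr 1
    ext
    push_cast
    rw [mul_one]
    exact Real.sq_sqrt hVpos.le
  rw [← hmap, Measure.map_apply (measurable_const_mul _) measurableSet_Iio]
  have hset : (fun y : ℝ => σ * y) ⁻¹' (Set.Iio (-A)) = Set.Iio (-(A / σ)) := by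
    ext y
    simp only [Set.mem_preimage, Set.mem_Iio]
    rw [← neg_div, lt_div_iff₀ hσpos, mul_comm]
  rw [hset, g01_neg]

/-- Exact pairwise error probability of the maximum-likelihood
symbol-wise decoder for 4-PAM over the AWGN channel: the probability that the
symbol metric difference is negative equals the Gaussian tail function `Q`
evaluated at the normalized distance, which equals `d·√(Σ (xₖ−x̂ₖ)²)/√v`. -/
theorem pep_sdec_awgn (d : ℝ) (hd : 0 < d) (v : NNReal) (hv : 0 < v)
    (N : ℕ) (hN : 1 ≤ N) (x xh : Fin N → Fin 4) (hne : x ≠ xh)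
    (s : Fin 4 → ℝ) (hs : ∀ i, s i = (2 * (i : ℝ) - 3) * d) :
    ((Measure.pi fun _ : Fin N => gaussianReal 0 v)
        {z : Fin N → ℝ | ∑ k, (2 * (s (x k) - s (xh k)) * (s (x k) + z k)
            + (s (xh k)) ^ 2 - (s (x k)) ^ 2) < 0}).toReal
      = ((gaussianReal 0 1) (Set.Ici
          ((∑ k, (s (x k) - s (xh k)) ^ 2)
            / Real.sqrt (∑ k, 4 * (s (x k) - s (xh k)) ^ 2 * (v : ℝ))))).toReal
    ∧ (∑ k, (s (x k) - s (xh k)) ^ 2)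
          / Real.sqrt (∑ k, 4 * (s (x k) - s (xh k)) ^ 2 * (v : ℝ))
        = d * Real.sqrt (∑ k, ((x k : ℝ) - (xh k : ℝ)) ^ 2) / Real.sqrt (v : ℝ) := by
  set a : Fin N → ℝ := fun k => s (x k) - s (xh k) with ha
  set A : ℝ := ∑ k, (a k) ^ 2 with hA
  set S : ℝ := ∑ k, ((x k : ℝ) - (xh k : ℝ)) ^ 2 with hS
  -- basic facts
  have hak : ∀ k, a k = 2 * d * ((x k : ℝ) - (xh k : ℝ)) := by
    intro k; simp only [ha, hs]; ring
  obtain ⟨k₀, hk₀⟩ := Function.ne_iff.1 hne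
  have hΔ : ((x k₀ : ℝ) - (xh k₀ : ℝ)) ≠ 0 := by
    intro h
    apply hk₀
    have : ((x k₀ : ℕ) : ℝ) = ((xh k₀ : ℕ) : ℝ) := by linarith [sub_eq_zero.1 h]
    exact Fin.val_injective (Nat.cast_injective this)
  have hSpos : 0 < S := by
    rw [hS]
    refine Finset.sum_pos' (fun k _ => sq_nonneg _) ⟨k₀, Finset.mem_univ _, ?_⟩
    positivity
  have hAS : A = 4 * d^2 * S := by
    rw [hA, hS, Finset.mul_sum]
    refine Finset.sum_congr rfl fun k _ => ?_
    rw [hak k]; ring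
  have hApos : 0 < A := by rw [hAS]; positivity
  -- the variance of the decision statistic
  set V : NNReal := ⟨(∑ k, (2 * a k)^2) * v, by positivity⟩ with hV
  have hVA : (V : ℝ) = ∑ k, 4 * (a k) ^ 2 * (v : ℝ) := by
    change (∑ k, (2 * a k)^2) * (v:ℝ) = _
    push_cast
    rw [Finset.sum_mul]
    exact Finset.sum_congr rfl fun k _ => by ring
  have hVpos : V ≠ 0 := by
    intro h
    have h2 := congrArg NNReal.toReal h
    rw [hVA] at h2
    have : (0:ℝ) < ∑ k, 4 * (a k) ^ 2 * (v : ℝ) := by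
      refine Finset.sum_pos' (fun k _ => by positivity) ⟨k₀, Finset.mem_univ _, ?_⟩
      have : a k₀ ≠ 0 := by rw [hak]; positivity
      have hvpos : (0:ℝ) < v := hv
      positivity
    have h3 : (V:ℝ) = 0 := by rw [h]; simp
    rw [hVA] at h3
    exact this.ne' h3
  constructor
  · -- probability computation
    congr 1
    have hset : {z : Fin N → ℝ | ∑ k, (2 * (s (x k) - s (xh k)) * (s (x k) + z k)
            + (s (xh k)) ^ 2 - (s (x k)) ^ 2) < 0}
        = (fun z : Fin N → ℝ => ∑ k, (2 * a k) * z k) ⁻¹' (Set.Iio (-A)) := by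
      ext z
      simp only [Set.mem_setOf_eq, Set.mem_preimage, Set.mem_Iio]
      have : ∑ k, (2 * (s (x k) - s (xh k)) * (s (x k) + z k)
            + (s (xh k)) ^ 2 - (s (x k)) ^ 2)
          = A + ∑ k, (2 * a k) * z k := by
        rw [hA, ← Finset.sum_add_distrib]
        refine Finset.sum_congr rfl fun k _ => ?_
        simp only [ha]; ring
      rw [this]
      constructor <;> intro h <;> linarith
    rw [hset, ← Measure.map_apply (by fun_prop) measurableSet_Iio,
      map_sum_gauss N (fun k => 2 * a k) v V rfl, gauss_Iio V hVpos A, hVA]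
  · -- algebraic identity
    have hsum : (∑ k, 4 * (a k) ^ 2 * (v : ℝ)) = (4 * d * Real.sqrt v * Real.sqrt S)^2 := by
      have h1 : (∑ k, 4 * (a k) ^ 2 * (v : ℝ)) = 4 * (v:ℝ) * A := by
        rw [hA, Finset.mul_sum]
        exact Finset.sum_congr rfl fun k _ => by ring
      rw [h1, hAS]
      have hv' : Real.sqrt v * Real.sqrt v = (v:ℝ) := Real.mul_self_sqrt v.coe_nonneg
      have hS' : Real.sqrt S * Real.sqrt S = S := Real.mul_self_sqrt hSpos.le
      rw [show (4*d*Real.sqrt v*Real.sqrt S)^2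
        = 16*d^2*((Real.sqrt v*Real.sqrt v)*(Real.sqrt S*Real.sqrt S)) by ring, hv', hS']
      ring
    rw [hsum, Real.sqrt_sq (by positivity), hAS]
    have hv' : Real.sqrt v * Real.sqrt v = (v:ℝ) := Real.mul_self_sqrt v.coe_nonneg
    have hS' : Real.sqrt S * Real.sqrt S = S := Real.mul_self_sqrt hSpos.le
    have hvpos : (0:ℝ) < v := hv
    have hsv : (0:ℝ) < Real.sqrt v := Real.sqrt_pos.2 hvpos
    have hsS : (0:ℝ) < Real.sqrt S := Real.sqrt_pos.2 hSpos
    rw [div_eq_div_iff (by positivity) hsv.ne']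
    linear_combination (-4*d^2*Real.sqrt (v:ℝ)) * hS'
end

section
/- For all real numbers β and w with β > 0 and w ≥ 0, equality √(β·(β + 8w)) = (2/√3)·(β + 2w) holds if and only if β = 4w. Consequently 2/√3 is the greatest value of the function (β, w) ↦ √(β(β+8w))/(β+2w) over the region β > 0, w ≥ 0, i.e., IsGreatest { r : ℝ | ∃ β w, 0 < β ∧ 0 ≤ w ∧ r = √(β(β+8w))/(β+2w) } (2/√3). -/
lemma aux_eq_iff (β w : ℝ) (hβ : 0 < β) (hw : 0 ≤ w) :
    Real.sqrt (β * (β + 8 * w)) = (2 / Real.sqrt 3) * (β + 2 * w) ↔ β = 4 * w := by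
  have h3 : (0:ℝ) < Real.sqrt 3 := Real.sqrt_pos.mpr (by norm_num)
  have hs3 : Real.sqrt 3 ^ 2 = 3 := Real.sq_sqrt (by norm_num)
  have hnn : 0 ≤ β * (β + 8 * w) := by nlinarith
  constructor
  · intro h
    have h2 := congrArg (· ^ 2) h
    rw [Real.sq_sqrt hnn] at h2
    have h2' : β * (β + 8 * w) * 3 = 4 * (β + 2 * w) ^ 2 := by
      field_simp at h2
      nlinarith [h2, hs3]
    nlinarith [sq_nonneg (β - 4 * w)]
  · intro h
    subst h
    have key : (4 * w) * (4 * w + 8 * w) = ((2 / Real.sqrt 3) * (4 * w + 2 * w)) ^ 2 := by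
      rw [mul_pow, div_pow, hs3]
      ring
    rw [key, Real.sqrt_sq (by positivity)]

/-- Equality `√(β(β+8w)) = (2/√3)(β+2w)` holds (for `β > 0`,
`w ≥ 0`) iff `β = 4w`; consequently `2/√3` is the greatest value of
`(β, w) ↦ √(β(β+8w))/(β+2w)` over the region `β > 0`, `w ≥ 0`. -/
theorem loss_ratio_eq_iff_and_isGreatest :
    (∀ β w : ℝ, 0 < β → 0 ≤ w →
      (Real.sqrt (β * (β + 8 * w)) = (2 / Real.sqrt 3) * (β + 2 * w) ↔ β = 4 * w))
    ∧ IsGreatest {r : ℝ | ∃ β w : ℝ, 0 < β ∧ 0 ≤ w ∧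
        r = Real.sqrt (β * (β + 8 * w)) / (β + 2 * w)} (2 / Real.sqrt 3) := by
  have h3 : (0:ℝ) < Real.sqrt 3 := Real.sqrt_pos.mpr (by norm_num)
  have hs3 : Real.sqrt 3 ^ 2 = 3 := Real.sq_sqrt (by norm_num)
  refine ⟨fun β w hβ hw => aux_eq_iff β w hβ hw, ⟨4, 1, by norm_num, by norm_num, ?_⟩, ?_⟩
  · have h := (aux_eq_iff 4 1 (by norm_num) (by norm_num)).mpr (by norm_num)
    rw [h]
    rw [mul_div_assoc]
    norm_num
  · rintro r ⟨β, w, hβ, hw, rfl⟩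
    have hd : 0 < β + 2 * w := by linarith
    rw [div_le_iff₀ hd]
    have hle : β * (β + 8 * w) ≤ ((2 / Real.sqrt 3) * (β + 2 * w)) ^ 2 := by
      rw [mul_pow, div_pow, hs3]
      nlinarith [sq_nonneg (β - 4 * w)]
    calc Real.sqrt (β * (β + 8 * w)) ≤ Real.sqrt (((2 / Real.sqrt 3) * (β + 2 * w)) ^ 2) :=
          Real.sqrt_le_sqrt hle
      _ = (2 / Real.sqrt 3) * (β + 2 * w) := Real.sqrt_sq (by positivity)
end

section
/- For all real numbers β and w with β > 0 and w ≥ 0, the loss in decibels satisfies 20 · Real.logb 10 ( √(β·(β + 8w)) / (β + 2w) ) ≤ 1.25. (In particular 20·logb 10 (2/√3) ≤ 1.25, equivalently (4/3)^8 ≤ 10.) -/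
/-- The asymptotic pairwise loss in decibels of the bit-wise
decoder relative to the symbol-wise decoder is at most 1.25 dB:
for `β > 0` and `w ≥ 0`, `20·log₁₀(√(β(β+8w))/(β+2w)) ≤ 1.25`. -/
theorem loss_dB_le (β w : ℝ) (hβ : 0 < β) (hw : 0 ≤ w) :
    20 * Real.logb 10 (Real.sqrt (β * (β + 8 * w)) / (β + 2 * w)) ≤ 1.25 := by
  set x : ℝ := Real.sqrt (β * (β + 8 * w)) / (β + 2 * w) with hxdef
  have hd : (0:ℝ) < β + 2 * w := by linarith
  have hnum : (0:ℝ) ≤ β * (β + 8 * w) := by nlinarith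
  have hx0 : 0 ≤ x := by positivity
  have hx2 : x ^ 2 ≤ 4 / 3 := by
    rw [hxdef, div_pow, Real.sq_sqrt hnum, div_le_div_iff₀ (by positivity) (by norm_num)]
    nlinarith [sq_nonneg (β - 4 * w)]
  have hx16 : x ^ 16 ≤ 10 := by
    have : x ^ 16 = (x ^ 2) ^ 8 := by ring
    rw [this]
    calc (x ^ 2) ^ 8 ≤ (4 / 3 : ℝ) ^ 8 := pow_le_pow_left₀ (by positivity) hx2 8
      _ ≤ 10 := by norm_num
  have hxle : x ≤ (10:ℝ) ^ ((0.0625 : ℝ)) := by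
    have hy : ((10:ℝ) ^ ((0.0625 : ℝ))) ^ (16:ℕ) = 10 := by
      rw [← Real.rpow_natCast ((10:ℝ) ^ ((0.0625 : ℝ))) 16, ← Real.rpow_mul (by norm_num)]
      norm_num
    have h16 : x ^ (16:ℕ) ≤ ((10:ℝ) ^ ((0.0625 : ℝ))) ^ (16:ℕ) := by rw [hy]; exact hx16
    exact le_of_pow_le_pow_left₀ (by norm_num) (by positivity) h16
  have hxpos : 0 < x := by
    have : 0 < Real.sqrt (β * (β + 8 * w)) := Real.sqrt_pos.mpr (by nlinarith)
    positivity
  have hlog : Real.logb 10 x ≤ 0.0625 :=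
    (Real.logb_le_iff_le_rpow (by norm_num) hxpos).mpr hxle
  linarith
end

section
/- (Theorem 1.) Let N ≥ 1 and let x, x̂ : Fin N → Fin 4 be two distinct 4-PAM symbol sequences. Then a^X(x, x̂) ≤ (2/√3) · a^B(x, x̂); equivalently, the asymptotic pairwise loss L(x, x̂) = 20 · Real.logb 10 ( a^X(x, x̂) / a^B(x, x̂) ) satisfies L(x, x̂) ≤ 1.25 dB. -/
open Finset

noncomputable section

/-- Pairwise weight of a pair of 4-PAM symbols: `1` if `|i−j| ∈ {1,3}`,
`4` if `|i−j| = 2`, `0` if `i = j`. -/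
def pw (i j : Fin 4) : ℝ :=
  if i = j then 0 else if ((i : ℤ) - (j : ℤ)).natAbs = 2 then 4 else 1

/-- Corner count: number of positions where the symbol pair is `(s₁,s₄)` or `(s₄,s₁)`. -/
def wc {N : ℕ} (x xh : Fin N → Fin 4) : ℕ :=
  (Finset.univ.filter fun k =>
    (x k, xh k) = ((0 : Fin 4), (3 : Fin 4)) ∨ (x k, xh k) = ((3 : Fin 4), (0 : Fin 4))).card

/-- Weighted error count `β(x, x̂)`. -/
def betaW {N : ℕ} (x xh : Fin N → Fin 4) : ℝ := ∑ k, pw (x k) (xh k)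

/-- Normalized distance of the symbol-wise decoder: `a^X = √(β + 8 w_c)`. -/
def aX {N : ℕ} (x xh : Fin N → Fin 4) : ℝ :=
  Real.sqrt (betaW x xh + 8 * wc x xh)

/-- Normalized distance of the bit-wise decoder: `a^B = (β + 2 w_c)/√β`. -/
def aB {N : ℕ} (x xh : Fin N → Fin 4) : ℝ :=
  (betaW x xh + 2 * wc x xh) / Real.sqrt (betaW x xh)

end

lemma pw_nonneg (i j : Fin 4) : 0 ≤ pw i j := by
  unfold pw; split_ifs <;> norm_num

lemma pw_pos_of_ne {i j : Fin 4} (h : i ≠ j) : 0 < pw i j := by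
  unfold pw; split_ifs <;> norm_num; exact h ‹_›

lemma betaW_pos {N : ℕ} (x xh : Fin N → Fin 4) (hne : x ≠ xh) :
    0 < betaW x xh := by
  obtain ⟨k, hk⟩ := Function.ne_iff.mp hne
  exact Finset.sum_pos' (fun i _ => pw_nonneg _ _)
    ⟨k, Finset.mem_univ k, pw_pos_of_ne hk⟩

/-- **Theorem 1.** For any two distinct 4-PAM symbol sequences,
`a^X(x,x̂) ≤ (2/√3)·a^B(x,x̂)`; equivalently, the asymptotic pairwise loss
`L(x,x̂) = 20·log₁₀(a^X/a^B)` is at most 1.25 dB. -/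
theorem asymptotic_pairwise_loss_le (N : ℕ) (hN : 1 ≤ N)
    (x xh : Fin N → Fin 4) (hne : x ≠ xh) :
    aX x xh ≤ (2 / Real.sqrt 3) * aB x xh
    ∧ 20 * Real.logb 10 (aX x xh / aB x xh) ≤ 1.25 := by
  set β := betaW x xh with hβdef
  set w : ℝ := (wc x xh : ℝ) with hwdef
  have hβ : 0 < β := betaW_pos x xh hne
  have hw : 0 ≤ w := Nat.cast_nonneg _
  have hsβ : 0 < Real.sqrt β := Real.sqrt_pos.mpr hβ
  have hs3 : 0 < Real.sqrt 3 := Real.sqrt_pos.mpr (by norm_num)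
  have haB : 0 < aB x xh := by
    unfold aB
    positivity
  -- main inequality
  have hmain : aX x xh ≤ (2 / Real.sqrt 3) * aB x xh := by
    have hR : 0 ≤ (2 / Real.sqrt 3) * aB x xh := by positivity
    have hkey : β + 8 * w ≤ ((2 / Real.sqrt 3) * aB x xh) ^ 2 := by
      have h3 : Real.sqrt 3 ^ 2 = 3 := Real.sq_sqrt (by norm_num)
      have hb : Real.sqrt β ^ 2 = β := Real.sq_sqrt hβ.le
      have hE : ((2 / Real.sqrt 3) * aB x xh) ^ 2 = 4 * (β + 2 * w) ^ 2 / (3 * β) := by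
        unfold aB
        rw [← hβdef, ← hwdef, mul_pow, div_pow, div_pow, h3, hb]
        ring
      rw [hE, le_div_iff₀ (by positivity)]
      nlinarith [sq_nonneg (β - 4 * w)]
    calc aX x xh = Real.sqrt (β + 8 * w) := rfl
      _ ≤ Real.sqrt (((2 / Real.sqrt 3) * aB x xh) ^ 2) := Real.sqrt_le_sqrt hkey
      _ = (2 / Real.sqrt 3) * aB x xh := Real.sqrt_sq hR
  refine ⟨hmain, ?_⟩
  -- logarithmic part
  have haX : 0 < aX x xh := by
    unfold aX
    rw [← hβdef, ← hwdef]
    exact Real.sqrt_pos.mpr (by linarith)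
  have hq : aX x xh / aB x xh ≤ 2 / Real.sqrt 3 := by
    rw [div_le_iff₀ haB]
    linarith [hmain]
  have hqpos : 0 < aX x xh / aB x xh := div_pos haX haB
  have h1 : Real.logb 10 (aX x xh / aB x xh) ≤ Real.logb 10 (2 / Real.sqrt 3) := by
    unfold Real.logb
    have hlog10 : 0 < Real.log 10 := Real.log_pos (by norm_num)
    have := Real.log_le_log hqpos hq
    gcongr
  have h2 : 20 * Real.logb 10 (2 / Real.sqrt 3) ≤ 1.25 := by
    have ht : (0:ℝ) < 2 / Real.sqrt 3 := by positivity
    have hlog10 : 0 < Real.log 10 := Real.log_pos (by norm_num)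
    have hpow : (2 / Real.sqrt 3) ^ (16:ℕ) = 65536 / 6561 := by
      rw [div_pow]
      have : (Real.sqrt 3) ^ (16:ℕ) = ((Real.sqrt 3) ^ 2) ^ 8 := by ring
      rw [this, Real.sq_sqrt (by norm_num : (3:ℝ) ≥ 0)]
      norm_num
    have h16 : 16 * Real.log (2 / Real.sqrt 3) ≤ Real.log 10 := by
      have := Real.log_le_log (by positivity : (0:ℝ) < 65536 / 6561)
        (by norm_num : (65536:ℝ) / 6561 ≤ 10)
      calc 16 * Real.log (2 / Real.sqrt 3)
          = Real.log ((2 / Real.sqrt 3) ^ (16:ℕ)) := by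
            rw [Real.log_pow]; push_cast; ring
        _ = Real.log (65536 / 6561) := by rw [hpow]
        _ ≤ Real.log 10 := this
    unfold Real.logb
    rw [← mul_div_assoc, div_le_iff₀ hlog10]
    nlinarith [h16, hlog10]
  calc 20 * Real.logb 10 (aX x xh / aB x xh)
      ≤ 20 * Real.logb 10 (2 / Real.sqrt 3) := by linarith
    _ ≤ 1.25 := h2
end

section
/- For N = 4, the symbol sequences x = ![0, 3, 2, 1] and x̂ = ![3, 2, 1, 0] (as functions Fin 4 → Fin 4, representing [s₁,s₄,s₃,s₂] and [s₄,s₃,s₂,s₁]) satisfy β(x,x̂) = 4, w_c(x,x̂) = 1, and hence a^X(x,x̂) = (2/√3) · a^B(x,x̂); i.e., this pair of codewords attains the maximal asymptotic pairwise loss 20·log₁₀(2/√3) ≈ 1.25 dB. -/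
open Finset

/-- The pair of codewords `x = [s₁,s₄,s₃,s₂]`,
`x̂ = [s₄,s₃,s₂,s₁]` has `β = 4`, `w_c = 1` and attains the maximal
asymptotic pairwise loss: `a^X = (2/√3)·a^B`. -/
theorem maximal_loss_pair :
    betaW ![(0 : Fin 4), 3, 2, 1] ![(3 : Fin 4), 2, 1, 0] = 4
    ∧ wc ![(0 : Fin 4), 3, 2, 1] ![(3 : Fin 4), 2, 1, 0] = 1
    ∧ aX ![(0 : Fin 4), 3, 2, 1] ![(3 : Fin 4), 2, 1, 0]
        = (2 / Real.sqrt 3) * aB ![(0 : Fin 4), 3, 2, 1] ![(3 : Fin 4), 2, 1, 0] := by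
  have hb : betaW ![(0 : Fin 4), 3, 2, 1] ![(3 : Fin 4), 2, 1, 0] = 4 := by
    simp [betaW, Fin.sum_univ_four, pw,
      show ¬((0:Fin 4) = 3) from by decide, show ¬((3:Fin 4) = 2) from by decide,
      show (((3:Fin 4):ℤ)) = 3 from by decide]
    norm_num
  have hw : wc ![(0 : Fin 4), 3, 2, 1] ![(3 : Fin 4), 2, 1, 0] = 1 := by
    decide
  refine ⟨hb, hw, ?_⟩
  rw [aX, aB, hb, hw]
  have h4 : Real.sqrt 4 = 2 := by
    rw [show (4:ℝ) = 2^2 by norm_num, Real.sqrt_sq (by norm_num)]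
  have h12 : Real.sqrt (4 + 8 * (1:ℕ)) = 2 * Real.sqrt 3 := by
    rw [show ((4:ℝ) + 8 * (1:ℕ)) = 2^2 * 3 by push_cast; ring,
      Real.sqrt_mul (by positivity), Real.sqrt_sq (by norm_num)]
  rw [h12, h4]
  have h3 : Real.sqrt 3 ≠ 0 := by positivity
  have hs : Real.sqrt 3 * Real.sqrt 3 = 3 := Real.mul_self_sqrt (by norm_num)
  push_cast
  rw [div_mul_eq_mul_div, eq_comm, div_eq_iff h3]
  nlinarith [hs]
end

section
/- Let N ≥ 1 and let x, x̂ : Fin N → Fin 4 be two distinct 4-PAM symbol sequences. Then a^B(x, x̂) ≤ a^X(x, x̂); i.e., the asymptotic pairwise loss of the bit-wise decoder relative to the symbol-wise decoder is nonnegative. (This follows from the inequality (β + 2w)/√β ≤ √(β + 8w), valid whenever 0 ≤ w ≤ β and β > 0, together with w_c(x,x̂) ≤ β(x,x̂).) -/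
open Finset

lemma one_le_pw {i j : Fin 4} (h : i ≠ j) : 1 ≤ pw i j := by
  unfold pw; split_ifs with h1 h2
  · exact absurd h1 h
  · norm_num
  · norm_num

/-- The asymptotic pairwise loss of the bit-wise decoder is
nonnegative: for any two distinct 4-PAM symbol sequences, `a^B(x,x̂) ≤ a^X(x,x̂)`. -/
theorem aB_le_aX (N : ℕ) (hN : 1 ≤ N) (x xh : Fin N → Fin 4) (hne : x ≠ xh) :
    aB x xh ≤ aX x xh := by
  set β := betaW x xh with hβ
  set w : ℝ := (wc x xh : ℝ) with hw
  have hw0 : 0 ≤ w := Nat.cast_nonneg _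
  -- β > 0
  obtain ⟨k, hk⟩ := Function.ne_iff.mp hne
  have hβpos : 0 < β := by
    rw [hβ, betaW]
    have : (0:ℝ) < ∑ j : Fin N, pw (x j) (xh j) := by
      apply Finset.sum_pos' (fun i _ => pw_nonneg _ _)
      exact ⟨k, Finset.mem_univ k, lt_of_lt_of_le one_pos (one_le_pw hk)⟩
    linarith
  -- w ≤ β
  have hwβ : w ≤ β := by
    have hcast : w = ∑ i ∈ Finset.univ.filter (fun k =>
        (x k, xh k) = ((0 : Fin 4), (3 : Fin 4)) ∨ (x k, xh k) = ((3 : Fin 4), (0 : Fin 4))),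
        (1:ℝ) := by rw [hw, wc]; simp
    set s := Finset.univ.filter (fun k =>
        (x k, xh k) = ((0 : Fin 4), (3 : Fin 4)) ∨ (x k, xh k) = ((3 : Fin 4), (0 : Fin 4)))
      with hs
    have heq : ∑ i ∈ s, (1:ℝ) = ∑ i ∈ s, pw (x i) (xh i) := by
      apply Finset.sum_congr rfl
      intro i hi
      rw [hs, Finset.mem_filter] at hi
      rcases hi.2 with h | h <;>
        · have h1 : x i = _ := congrArg Prod.fst h
          have h2 : xh i = _ := congrArg Prod.snd h
          simp only at h1 h2
          rw [pw, h1, h2, if_neg (by decide), if_neg (by decide)]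
    rw [hcast, hβ, betaW, heq]
    exact Finset.sum_le_sum_of_subset_of_nonneg (Finset.filter_subset _ _)
      (fun i _ _ => pw_nonneg _ _)
  have hsβ : 0 < Real.sqrt β := Real.sqrt_pos.mpr hβpos
  rw [aB, aX, ← hβ, ← hw, div_le_iff₀ hsβ]
  have key : β + 2 * w ≤ Real.sqrt ((β + 8 * w) * β) := by
    rw [show β + 2 * w = Real.sqrt ((β + 2 * w)^2) by
      rw [Real.sqrt_sq (by linarith)]]
    apply Real.sqrt_le_sqrt
    nlinarith [mul_le_mul_of_nonneg_left hwβ hw0]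
  calc β + 2 * w ≤ Real.sqrt ((β + 8 * w) * β) := key
    _ = Real.sqrt (β + 8 * w) * Real.sqrt β := Real.sqrt_mul (by linarith) _
end

section
/- (Theorem 2.) Let N ≥ 1, let L be either the Gray labeling GC3 or GC4, and let B be a ZMod 2-submodule of (Fin N → ZMod 2 × ZMod 2) containing at least two elements. For b ∈ B write x_b = L⁻¹ ∘ b : Fin N → Fin 4. Then the minimum of a^X(x_b, x_b̂) over all pairs b ≠ b̂ in B equals the minimum of a^B(x_b, x_b̂) over all pairs b ≠ b̂ in B; i.e., the asymptotic loss L(B) of the bit-wise decoder is zero. -/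
open Finset

noncomputable section

/-- The Gray labeling GC1 (binary reflected Gray code) for 4-PAM. -/
def GC1 : Fin 4 ≃ (ZMod 2 × ZMod 2) where
  toFun := ![(0, 0), (0, 1), (1, 1), (1, 0)]
  invFun := fun p => if p = (0, 0) then 0 else if p = (0, 1) then 1
    else if p = (1, 1) then 2 else 3
  left_inv := by decide
  right_inv := by decide

/-- The Gray labeling GC2 for 4-PAM. -/
def GC2 : Fin 4 ≃ (ZMod 2 × ZMod 2) where
  toFun := ![(0, 0), (1, 0), (1, 1), (0, 1)]
  invFun := fun p => if p = (0, 0) then 0 else if p = (1, 0) then 1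
    else if p = (1, 1) then 2 else 3
  left_inv := by decide
  right_inv := by decide

/-- The Gray labeling GC3 for 4-PAM. -/
def GC3 : Fin 4 ≃ (ZMod 2 × ZMod 2) where
  toFun := ![(0, 1), (0, 0), (1, 0), (1, 1)]
  invFun := fun p => if p = (0, 1) then 0 else if p = (0, 0) then 1
    else if p = (1, 0) then 2 else 3
  left_inv := by decide
  right_inv := by decide

/-- The Gray labeling GC4 for 4-PAM. -/
def GC4 : Fin 4 ≃ (ZMod 2 × ZMod 2) where
  toFun := ![(1, 0), (0, 0), (0, 1), (1, 1)]
  invFun := fun p => if p = (1, 0) then 0 else if p = (0, 0) then 1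
    else if p = (0, 1) then 2 else 3
  left_inv := by decide
  right_inv := by decide

/-- Symbol sequence corresponding to a binary codeword under labeling `L`. -/
def xb {N : ℕ} (L : Fin 4 ≃ (ZMod 2 × ZMod 2)) (b : Fin N → ZMod 2 × ZMod 2) :
    Fin N → Fin 4 := fun k => L.symm (b k)

end


noncomputable section

/-- Weight of a difference symbol. -/
def bw (d : ZMod 2 × ZMod 2) : ℝ := if d = 0 then 0 else if d = (1,1) then 4 else 1

/-- Weighted count of a difference word. -/
def betaD {N : ℕ} (d : Fin N → ZMod 2 × ZMod 2) : ℝ := ∑ k, bw (d k)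

lemma pw_GC3 (i j : Fin 4) : pw i j = bw (GC3 i - GC3 j) := by
  fin_cases i <;> fin_cases j <;> simp (config := { decide := true }) [pw, bw, GC3]

lemma pw_GC4 (i j : Fin 4) : pw i j = bw (GC4 i - GC4 j) := by
  fin_cases i <;> fin_cases j <;> simp (config := { decide := true }) [pw, bw, GC4]

lemma pw_L (L : Fin 4 ≃ (ZMod 2 × ZMod 2)) (hL : L = GC3 ∨ L = GC4)
    (u v : ZMod 2 × ZMod 2) : pw (L.symm u) (L.symm v) = bw (u - v) := by
  rcases hL with h | h <;> subst h
  · rw [pw_GC3, Equiv.apply_symm_apply, Equiv.apply_symm_apply]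
  · rw [pw_GC4, Equiv.apply_symm_apply, Equiv.apply_symm_apply]

lemma betaW_eq {N : ℕ} (L : Fin 4 ≃ (ZMod 2 × ZMod 2)) (hL : L = GC3 ∨ L = GC4)
    (b bh : Fin N → ZMod 2 × ZMod 2) :
    betaW (xb L b) (xb L bh) = betaD (b - bh) := by
  unfold betaW betaD xb
  exact Finset.sum_congr rfl fun k _ => by rw [pw_L L hL, Pi.sub_apply]

lemma bw_nonneg (d : ZMod 2 × ZMod 2) : 0 ≤ bw d := by
  unfold bw; split_ifs <;> norm_num

lemma betaD_nonneg {N : ℕ} (d : Fin N → ZMod 2 × ZMod 2) : 0 ≤ betaD d :=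
  Finset.sum_nonneg fun k _ => bw_nonneg _

lemma betaD_pos {N : ℕ} {d : Fin N → ZMod 2 × ZMod 2} (hd : d ≠ 0) : 0 < betaD d := by
  obtain ⟨k, hk⟩ := Function.ne_iff.mp hd
  rw [Pi.zero_apply] at hk
  refine Finset.sum_pos' (fun k _ => bw_nonneg _) ⟨k, Finset.mem_univ k, ?_⟩
  unfold bw
  rw [if_neg hk]
  split_ifs <;> norm_num

lemma wc_zero {N : ℕ} (L : Fin 4 ≃ (ZMod 2 × ZMod 2)) (hL : L = GC3 ∨ L = GC4)
    (d : Fin N → ZMod 2 × ZMod 2) : wc (xb L 0) (xb L d) = 0 := by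
  have h0 : L.symm 0 = 1 := by rcases hL with h | h <;> subst h <;> decide
  unfold wc
  rw [Finset.card_eq_zero, Finset.filter_eq_empty_iff]
  intro k _
  have : xb L 0 k = 1 := by simp [xb, h0]
  rw [this]
  simp (config := { decide := true }) [Prod.ext_iff]

lemma wc_cast_nonneg {N : ℕ} (x xh : Fin N → Fin 4) : (0:ℝ) ≤ (wc x xh : ℝ) :=
  Nat.cast_nonneg _

lemma neg_self {N : ℕ} (d : Fin N → ZMod 2 × ZMod 2) : -d = d := by
  funext k
  rw [Pi.neg_apply]
  exact (by decide : ∀ u : ZMod 2 × ZMod 2, -u = u) (d k)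

end

/-- **Theorem 2.** For 4-PAM with the Gray labeling GC3 or GC4 and
any binary linear code `B` (with at least two codewords), the minimum normalized
distance of the symbol-wise decoder over all pairs of distinct codewords equals
that of the bit-wise decoder: the asymptotic loss `L(B)` is zero. -/
theorem loss_zero_GC3_GC4 (N : ℕ) (hN : 1 ≤ N)
    (L : Fin 4 ≃ (ZMod 2 × ZMod 2)) (hL : L = GC3 ∨ L = GC4)
    (B : Submodule (ZMod 2) (Fin N → ZMod 2 × ZMod 2))
    (hB : (B : Set (Fin N → ZMod 2 × ZMod 2)).Nontrivial) :
    sInf {r : ℝ | ∃ b ∈ B, ∃ bh ∈ B, b ≠ bh ∧ r = aX (xb L b) (xb L bh)}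
      = sInf {r : ℝ | ∃ b ∈ B, ∃ bh ∈ B, b ≠ bh ∧ r = aB (xb L b) (xb L bh)} := by
  set SX := {r : ℝ | ∃ b ∈ B, ∃ bh ∈ B, b ≠ bh ∧ r = aX (xb L b) (xb L bh)} with hSX
  set SB := {r : ℝ | ∃ b ∈ B, ∃ bh ∈ B, b ≠ bh ∧ r = aB (xb L b) (xb L bh)} with hSB
  set T : Set ℝ := {r : ℝ | ∃ d ∈ B, d ≠ 0 ∧ r = Real.sqrt (betaD d)} with hT
  -- the pair (0, d) has no corners and the same beta
  have haX0 : ∀ d : Fin N → ZMod 2 × ZMod 2,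
      aX (xb L 0) (xb L d) = Real.sqrt (betaD d) := by
    intro d
    rw [aX, wc_zero L hL, betaW_eq L hL, zero_sub, neg_self]
    norm_num
  have haB0 : ∀ d : Fin N → ZMod 2 × ZMod 2, d ≠ 0 →
      aB (xb L 0) (xb L d) = Real.sqrt (betaD d) := by
    intro d hd
    rw [aB, wc_zero L hL, betaW_eq L hL, zero_sub, neg_self]
    rw [Nat.cast_zero]
    rw [mul_zero, add_zero, Real.div_sqrt]
  -- T is contained in both sets
  have hTX : T ⊆ SX := by
    rintro r ⟨d, hd, hd0, rfl⟩
    exact ⟨0, B.zero_mem, d, hd, fun h => hd0 h.symm, (haX0 d).symm⟩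
  have hTB : T ⊆ SB := by
    rintro r ⟨d, hd, hd0, rfl⟩
    exact ⟨0, B.zero_mem, d, hd, fun h => hd0 h.symm, (haB0 d hd0).symm⟩
  -- every element of SX / SB dominates an element of T
  have hsub : ∀ b bh : Fin N → ZMod 2 × ZMod 2, b ∈ B → bh ∈ B → b ≠ bh →
      b - bh ∈ B ∧ b - bh ≠ 0 := fun b bh hb hbh hne =>
    ⟨B.sub_mem hb hbh, sub_ne_zero_of_ne hne⟩
  have hXdom : ∀ r ∈ SX, ∃ t ∈ T, t ≤ r := by
    rintro r ⟨b, hb, bh, hbh, hne, rfl⟩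
    obtain ⟨hdB, hd0⟩ := hsub b bh hb hbh hne
    refine ⟨Real.sqrt (betaD (b - bh)), ⟨b - bh, hdB, hd0, rfl⟩, ?_⟩
    rw [aX, betaW_eq L hL]
    exact Real.sqrt_le_sqrt (by linarith [wc_cast_nonneg (xb L b) (xb L bh)])
  have hBdom : ∀ r ∈ SB, ∃ t ∈ T, t ≤ r := by
    rintro r ⟨b, hb, bh, hbh, hne, rfl⟩
    obtain ⟨hdB, hd0⟩ := hsub b bh hb hbh hne
    refine ⟨Real.sqrt (betaD (b - bh)), ⟨b - bh, hdB, hd0, rfl⟩, ?_⟩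
    rw [aB, betaW_eq L hL]
    have hpos : 0 < betaD (b - bh) := betaD_pos hd0
    have hs : 0 < Real.sqrt (betaD (b - bh)) := Real.sqrt_pos.mpr hpos
    calc Real.sqrt (betaD (b - bh)) = betaD (b - bh) / Real.sqrt (betaD (b - bh)) :=
          (Real.div_sqrt).symm
      _ ≤ (betaD (b - bh) + 2 * (wc (xb L b) (xb L bh) : ℝ)) / Real.sqrt (betaD (b - bh)) :=
          (div_le_div_iff_of_pos_right hs).mpr
            (by linarith [wc_cast_nonneg (xb L b) (xb L bh)])
  -- nonemptiness and bounds
  obtain ⟨b₀, hb₀, c₀, hc₀, hne₀⟩ := hB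
  have hTne : T.Nonempty := by
    obtain ⟨hdB, hd0⟩ := hsub b₀ c₀ hb₀ hc₀ hne₀
    exact ⟨_, b₀ - c₀, hdB, hd0, rfl⟩
  have hXbdd : BddBelow SX := by
    refine ⟨0, ?_⟩
    rintro r ⟨b, hb, bh, hbh, hne, rfl⟩
    exact Real.sqrt_nonneg _
  have hBbdd : BddBelow SB := by
    refine ⟨0, ?_⟩
    rintro r ⟨b, hb, bh, hbh, hne, rfl⟩
    have h1 : 0 ≤ betaW (xb L b) (xb L bh) := by
      rw [betaW_eq L hL]; exact betaD_nonneg _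
    have h2 := wc_cast_nonneg (xb L b) (xb L bh)
    exact div_nonneg (by linarith) (Real.sqrt_nonneg _)
  have key : ∀ (S : Set ℝ), T ⊆ S → BddBelow S → (∀ r ∈ S, ∃ t ∈ T, t ≤ r) →
      sInf S = sInf T := by
    intro S hTS hbdd hdom
    refine le_antisymm (csInf_le_csInf hbdd hTne hTS) ?_
    refine le_csInf ⟨_, hTS hTne.choose_spec⟩ ?_
    intro r hr
    obtain ⟨t, ht, hle⟩ := hdom r hr
    exact le_trans (csInf_le (hbdd.mono hTS) ht) hle
  rw [key SX hTX hXbdd hXdom, key SB hTB hBbdd hBdom]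
end

section
/- Let N ≥ 1, let L = GC3, and let B be a ZMod 2-submodule of (Fin N → ZMod 2 × ZMod 2). Let b, b̂ ∈ B with b ≠ b̂ and w_c(x_b, x_b̂) ≠ 0, where x_b = L⁻¹ ∘ b. Then the codewords b' = 0 and b̂' = b + b̂ also lie in B, satisfy w_c(x_{b'}, x_{b̂'}) = 0 and β(x_{b'}, x_{b̂'}) = β(x_b, x_b̂), and both a^X(x_{b'}, x_{b̂'}) < a^X(x_b, x_b̂) and a^B(x_{b'}, x_{b̂'}) < a^B(x_b, x_b̂) hold. -/
open Finset

lemma pw_key (p q : ZMod 2 × ZMod 2) :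
    pw (GC3.symm p) (GC3.symm q) = pw (GC3.symm 0) (GC3.symm (p + q)) := by
  fin_cases p <;> fin_cases q <;> rfl

/-- Key step in the proof of Theorem 2 (GC3 case): if `b ≠ b̂`
are codewords of a linear code with `w_c(x_b, x_b̂) ≠ 0`, then `b' = 0` and
`b̂' = b + b̂` are also codewords, with zero corner count, the same `β`, and
strictly smaller normalized distances for both decoders. -/
theorem shift_reduces_distance_GC3 (N : ℕ) (hN : 1 ≤ N)
    (B : Submodule (ZMod 2) (Fin N → ZMod 2 × ZMod 2))
    (b bh : Fin N → ZMod 2 × ZMod 2) (hb : b ∈ B) (hbh : bh ∈ B)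
    (hne : b ≠ bh) (hwc : wc (xb GC3 b) (xb GC3 bh) ≠ 0) :
    (0 : Fin N → ZMod 2 × ZMod 2) ∈ B
    ∧ b + bh ∈ B
    ∧ wc (xb GC3 (0 : Fin N → ZMod 2 × ZMod 2)) (xb GC3 (b + bh)) = 0
    ∧ betaW (xb GC3 (0 : Fin N → ZMod 2 × ZMod 2)) (xb GC3 (b + bh))
        = betaW (xb GC3 b) (xb GC3 bh)
    ∧ aX (xb GC3 (0 : Fin N → ZMod 2 × ZMod 2)) (xb GC3 (b + bh))
        < aX (xb GC3 b) (xb GC3 bh)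
    ∧ aB (xb GC3 (0 : Fin N → ZMod 2 × ZMod 2)) (xb GC3 (b + bh))
        < aB (xb GC3 b) (xb GC3 bh) := by
  have hsymm0 : GC3.symm ((0:ZMod 2), (0:ZMod 2)) = 1 := rfl
  have hwc0 : wc (xb GC3 (0 : Fin N → ZMod 2 × ZMod 2)) (xb GC3 (b + bh)) = 0 := by
    unfold wc
    rw [Finset.card_eq_zero, Finset.filter_eq_empty_iff]
    intro k _
    simp only [xb, Pi.zero_apply]
    rw [show ((0 : ZMod 2 × ZMod 2)) = ((0:ZMod 2),(0:ZMod 2)) from rfl, hsymm0]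
    rintro (h | h) <;>
    · have h1 : (1 : Fin 4) = _ := congrArg Prod.fst h
      exact absurd h1 (by decide)
  have hbeta : betaW (xb GC3 (0 : Fin N → ZMod 2 × ZMod 2)) (xb GC3 (b + bh))
      = betaW (xb GC3 b) (xb GC3 bh) := by
    unfold betaW
    refine Finset.sum_congr rfl fun k _ => ?_
    simp only [xb, Pi.add_apply, Pi.zero_apply]
    exact (pw_key (b k) (bh k)).symm
  have hbnn : (0:ℝ) ≤ betaW (xb GC3 b) (xb GC3 bh) :=
    Finset.sum_nonneg fun k _ => pw_nonneg _ _
  have hbpos : (0:ℝ) < betaW (xb GC3 b) (xb GC3 bh) := by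
    obtain ⟨k, hk⟩ := Finset.card_ne_zero.mp hwc
    rw [Finset.mem_filter] at hk
    have hpw : pw (xb GC3 b k) (xb GC3 bh k) = 1 := by
      rcases hk.2 with h | h <;>
      · have h1 := congrArg Prod.fst h; have h2 := congrArg Prod.snd h
        simp only at h1 h2
        rw [h1, h2]; rfl
    calc (0:ℝ) < 1 := one_pos
    _ = pw (xb GC3 b k) (xb GC3 bh k) := hpw.symm
    _ ≤ _ := Finset.single_le_sum (fun i _ => pw_nonneg _ _) (Finset.mem_univ k)
  have hwcpos : (0:ℝ) < (wc (xb GC3 b) (xb GC3 bh) : ℝ) := by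
    exact_mod_cast Nat.pos_of_ne_zero hwc
  refine ⟨B.zero_mem, B.add_mem hb hbh, hwc0, hbeta, ?_, ?_⟩
  · unfold aX
    rw [hwc0, hbeta]
    apply Real.sqrt_lt_sqrt (by linarith)
    push_cast; linarith
  · unfold aB
    rw [hwc0, hbeta]
    have hs : 0 < Real.sqrt (betaW (xb GC3 b) (xb GC3 bh)) := Real.sqrt_pos.mpr hbpos
    rw [div_lt_div_iff_of_pos_right hs]
    push_cast
    linarith
end

section
/- (Theorem 3, GC1 case.) Let N ≥ 1, let L = GC1, and let B be a ZMod 2-submodule of (Fin N → ZMod 2 × ZMod 2) containing at least two elements. Suppose B contains a codeword b'' such that the second coordinate (b'' k).2 = 1 for every k ∈ Fin N. Then the minimum of a^X(x_b, x_b̂) over all pairs b ≠ b̂ in B equals the minimum of a^B(x_b, x_b̂) over all such pairs; i.e., the asymptotic loss L(B) of the bit-wise decoder is zero. -/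
open Finset

section Aux

/-- the per-symbol weight as a function of the label difference (GC1). -/
noncomputable def pwe : ZMod 2 × ZMod 2 → ℝ :=
  fun e => if e = 0 then 0 else if e = (1, 1) then 4 else 1

lemma pw_eq_pwe (i j : Fin 4) : pw i j = pwe (GC1 i + GC1 j) := by
  have h : ∀ i j : Fin 4,
      (i = j ↔ GC1 i + GC1 j = 0) ∧
      (((i : ℤ) - (j : ℤ)).natAbs = 2 ↔ GC1 i + GC1 j = (1, 1)) := by decide
  unfold pw pwe
  simp only [(h i j).1, (h i j).2]

lemma betaW_GC1 {N : ℕ} (b bh : Fin N → ZMod 2 × ZMod 2) :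
    betaW (xb GC1 b) (xb GC1 bh) = ∑ k, pwe (b k + bh k) := by
  unfold betaW xb
  refine Finset.sum_congr rfl fun k _ => ?_
  rw [pw_eq_pwe]
  simp

lemma betaW_nonneg {N : ℕ} (x xh : Fin N → Fin 4) : 0 ≤ betaW x xh :=
  Finset.sum_nonneg fun k _ => pw_nonneg _ _

lemma betaW_pos_of_ne {N : ℕ} {b bh : Fin N → ZMod 2 × ZMod 2} (h : b ≠ bh) :
    0 < betaW (xb GC1 b) (xb GC1 bh) := by
  obtain ⟨k, hk⟩ := Function.ne_iff.mp h
  have hx : xb GC1 b k ≠ xb GC1 bh k := by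
    intro he
    exact hk (by simpa [xb] using congrArg GC1 he)
  have h1 : (1 : ℝ) ≤ pw (xb GC1 b k) (xb GC1 bh k) := one_le_pw hx
  have h2 : pw (xb GC1 b k) (xb GC1 bh k) ≤ betaW (xb GC1 b) (xb GC1 bh) :=
    Finset.single_le_sum (fun i _ => pw_nonneg _ _) (Finset.mem_univ k)
  linarith

lemma wc_eq_zero {N : ℕ} (x xh : Fin N → Fin 4) (hx : ∀ k, x k ≠ 0 ∧ x k ≠ 3) :
    wc x xh = 0 := by
  unfold wc
  rw [Finset.card_eq_zero, Finset.filter_eq_empty_iff]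
  intro k _
  rintro (h | h)
  · exact (hx k).1 (congrArg Prod.fst h)
  · exact (hx k).2 (congrArg Prod.fst h)

end Aux

/-- **Theorem 3, GC1 case.** For 4-PAM with GC1, the asymptotic
loss `L(B)` is zero for any linear code `B` (with at least two codewords) that
contains a codeword whose second bit is `1` in every position. -/
theorem loss_zero_GC1 (N : ℕ) (hN : 1 ≤ N)
    (B : Submodule (ZMod 2) (Fin N → ZMod 2 × ZMod 2))
    (hB : (B : Set (Fin N → ZMod 2 × ZMod 2)).Nontrivial)
    (b'' : Fin N → ZMod 2 × ZMod 2) (hb'' : b'' ∈ B)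
    (hall : ∀ k, (b'' k).2 = 1) :
    sInf {r : ℝ | ∃ b ∈ B, ∃ bh ∈ B, b ≠ bh ∧ r = aX (xb GC1 b) (xb GC1 bh)}
      = sInf {r : ℝ | ∃ b ∈ B, ∃ bh ∈ B, b ≠ bh ∧ r = aB (xb GC1 b) (xb GC1 bh)} := by
  have hxx : ∀ x : ZMod 2 × ZMod 2, x + x = 0 := by decide
  have hsym : ∀ p : ZMod 2 × ZMod 2, p.2 = 1 → GC1.symm p ≠ 0 ∧ GC1.symm p ≠ 3 := by decide
  set SX := {r : ℝ | ∃ b ∈ B, ∃ bh ∈ B, b ≠ bh ∧ r = aX (xb GC1 b) (xb GC1 bh)} with hSX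
  set SB := {r : ℝ | ∃ b ∈ B, ∃ bh ∈ B, b ≠ bh ∧ r = aB (xb GC1 b) (xb GC1 bh)} with hSB
  -- key construction : for every pair there is a pair realizing √β for both aX and aB
  have key : ∀ b ∈ B, ∀ bh ∈ B, b ≠ bh →
      ∃ c ∈ B, ∃ ch ∈ B, c ≠ ch ∧
        aX (xb GC1 c) (xb GC1 ch) = Real.sqrt (betaW (xb GC1 b) (xb GC1 bh)) ∧
        aB (xb GC1 c) (xb GC1 ch) = Real.sqrt (betaW (xb GC1 b) (xb GC1 bh)) := by
    intro b hb bh hbh hne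
    have hwc : wc (xb GC1 b'') (xb GC1 (b'' + (b + bh))) = 0 :=
      wc_eq_zero _ _ fun k => hsym (b'' k) (hall k)
    have hbeta : betaW (xb GC1 b'') (xb GC1 (b'' + (b + bh)))
        = betaW (xb GC1 b) (xb GC1 bh) := by
      rw [betaW_GC1, betaW_GC1]
      refine Finset.sum_congr rfl fun k _ => ?_
      have h3 : b'' k + (b'' k + (b k + bh k)) = b k + bh k := by
        rw [← add_assoc, hxx, zero_add]
      simp [Pi.add_apply, h3]
    refine ⟨b'', hb'', b'' + (b + bh), B.add_mem hb'' (B.add_mem hb hbh), ?_, ?_, ?_⟩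
    · intro h
      apply hne
      have he : b + bh = 0 := (left_eq_add.mp h)
      funext k
      have h0 : b k + bh k = 0 := congrFun he k
      have h1 : b k = -(bh k) := eq_neg_of_add_eq_zero_left h0
      have h2 : -(bh k) = bh k := neg_eq_of_add_eq_zero_left (hxx (bh k))
      rw [h1, h2]
    · rw [aX, hwc, hbeta]; norm_num
    · rw [aB, hwc, hbeta]; norm_num [Real.div_sqrt]
  -- lower bounds for general pairs
  have hXge : ∀ b ∈ B, ∀ bh ∈ B, b ≠ bh →
      Real.sqrt (betaW (xb GC1 b) (xb GC1 bh)) ≤ aX (xb GC1 b) (xb GC1 bh) := by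
    intro b hb bh hbh hne
    apply Real.sqrt_le_sqrt
    have : (0 : ℝ) ≤ 8 * (wc (xb GC1 b) (xb GC1 bh) : ℝ) := by positivity
    linarith
  have hBge : ∀ b ∈ B, ∀ bh ∈ B, b ≠ bh →
      Real.sqrt (betaW (xb GC1 b) (xb GC1 bh)) ≤ aB (xb GC1 b) (xb GC1 bh) := by
    intro b hb bh hbh hne
    have hpos : 0 < betaW (xb GC1 b) (xb GC1 bh) := betaW_pos_of_ne hne
    have hs : 0 < Real.sqrt (betaW (xb GC1 b) (xb GC1 bh)) := Real.sqrt_pos.mpr hpos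
    rw [aB]
    calc Real.sqrt (betaW (xb GC1 b) (xb GC1 bh))
        = betaW (xb GC1 b) (xb GC1 bh) / Real.sqrt (betaW (xb GC1 b) (xb GC1 bh)) :=
          (Real.div_sqrt).symm
      _ ≤ (betaW (xb GC1 b) (xb GC1 bh) + 2 * (wc (xb GC1 b) (xb GC1 bh) : ℝ)) /
            Real.sqrt (betaW (xb GC1 b) (xb GC1 bh)) := by
          have h2 : (0 : ℝ) ≤ 2 * (wc (xb GC1 b) (xb GC1 bh) : ℝ) := by positivity
          gcongr
          linarith
  -- both sets are nonempty and bounded below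
  obtain ⟨b0, hb0, bh0, hbh0, hne0⟩ := hB
  have hSXne : SX.Nonempty := ⟨_, b0, hb0, bh0, hbh0, hne0, rfl⟩
  have hSBne : SB.Nonempty := ⟨_, b0, hb0, bh0, hbh0, hne0, rfl⟩
  have hSXbdd : BddBelow SX := by
    refine ⟨0, ?_⟩
    rintro r ⟨b, hb, bh, hbh, hne, rfl⟩
    exact Real.sqrt_nonneg _
  have hSBbdd : BddBelow SB := by
    refine ⟨0, ?_⟩
    rintro r ⟨b, hb, bh, hbh, hne, rfl⟩
    refine div_nonneg ?_ (Real.sqrt_nonneg _)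
    have := betaW_nonneg (xb GC1 b) (xb GC1 bh)
    positivity
  apply le_antisymm
  · apply le_csInf hSBne
    rintro r ⟨b, hb, bh, hbh, hne, rfl⟩
    obtain ⟨c, hc, ch, hch, hcne, hcX, _⟩ := key b hb bh hbh hne
    calc sInf SX ≤ aX (xb GC1 c) (xb GC1 ch) := csInf_le hSXbdd ⟨c, hc, ch, hch, hcne, rfl⟩
      _ = Real.sqrt (betaW (xb GC1 b) (xb GC1 bh)) := hcX
      _ ≤ aB (xb GC1 b) (xb GC1 bh) := hBge b hb bh hbh hne
  · apply le_csInf hSXne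
    rintro r ⟨b, hb, bh, hbh, hne, rfl⟩
    obtain ⟨c, hc, ch, hch, hcne, _, hcB⟩ := key b hb bh hbh hne
    calc sInf SB ≤ aB (xb GC1 c) (xb GC1 ch) := csInf_le hSBbdd ⟨c, hc, ch, hch, hcne, rfl⟩
      _ = Real.sqrt (betaW (xb GC1 b) (xb GC1 bh)) := hcB
      _ ≤ aX (xb GC1 b) (xb GC1 bh) := hXge b hb bh hbh hne
end

section
/- (Corollary 1, second part: the 1.25 dB bound is attained by a linear code.) There exist N ≥ 1 and a ZMod 2-submodule B of (Fin N → ZMod 2 × ZMod 2) with exactly two elements such that, under the labeling GC1, the (unique) pair of distinct codewords b ≠ b̂ in B satisfies a^X(x_b, x_b̂) = (2/√3) · a^B(x_b, x_b̂); hence the asymptotic loss L(B) equals 20·log₁₀(2/√3) ≈ 1.25 dB. (One such code has N = 4 and is spanned by the codeword b with b = [(1,0),(0,1),(0,1),(0,1)], for which β = 4 and w_c = 1.) -/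
open Finset

def cwd : Fin 4 → ZMod 2 × ZMod 2 := ![(1,0),(0,1),(0,1),(0,1)]

def Bc : Submodule (ZMod 2) (Fin 4 → ZMod 2 × ZMod 2) where
  carrier := {0, cwd}
  zero_mem' := Or.inl rfl
  add_mem' := by
    rintro a b (rfl | rfl) (rfl | rfl)
    · exact Or.inl (add_zero 0)
    · exact Or.inr (zero_add cwd)
    · exact Or.inr (add_zero cwd)
    · exact Or.inl (by decide)
  smul_mem' := by
    rintro a x (rfl | rfl)
    · exact Or.inl (smul_zero a)
    · fin_cases a
      · exact Or.inl (zero_smul _ cwd)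
      · exact Or.inr (one_smul _ cwd)

set_option maxRecDepth 4000 in
lemma key : aX (xb GC1 0) (xb GC1 cwd) = (2 / Real.sqrt 3) * aB (xb GC1 0) (xb GC1 cwd)
    ∧ aX (xb GC1 cwd) (xb GC1 0) = (2 / Real.sqrt 3) * aB (xb GC1 cwd) (xb GC1 0) := by
  have hx0 : xb GC1 (0 : Fin 4 → ZMod 2 × ZMod 2) = fun _ => 0 := by
    funext k; fin_cases k <;> rfl
  have hxc : xb GC1 cwd = ![3,1,1,1] := by
    funext k; fin_cases k <;> rfl
  have p03 : pw 0 3 = 1 := by rw [pw, if_neg (by decide), if_neg (by decide)]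
  have p30 : pw 3 0 = 1 := by rw [pw, if_neg (by decide), if_neg (by decide)]
  have p01 : pw 0 1 = 1 := by rw [pw, if_neg (by decide), if_neg (by decide)]
  have p10 : pw 1 0 = 1 := by rw [pw, if_neg (by decide), if_neg (by decide)]
  have hb1 : betaW (xb GC1 0) (xb GC1 cwd) = 4 := by
    rw [hx0, hxc]; simp [betaW, Fin.sum_univ_four, p03, p01]; norm_num
  have hb2 : betaW (xb GC1 cwd) (xb GC1 0) = 4 := by
    rw [hx0, hxc]; simp [betaW, Fin.sum_univ_four, p30, p10]; norm_num
  have hw1 : wc (xb GC1 0) (xb GC1 cwd) = 1 := by rw [hx0, hxc]; decide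
  have hw2 : wc (xb GC1 cwd) (xb GC1 0) = 1 := by rw [hx0, hxc]; decide
  have h4 : Real.sqrt 4 = 2 := by
    rw [show (4:ℝ) = 2^2 by norm_num, Real.sqrt_sq (by norm_num)]
  have h12 : Real.sqrt 12 = 2 * Real.sqrt 3 := by
    rw [show (12:ℝ) = 2^2 * 3 by norm_num, Real.sqrt_mul (by positivity),
      Real.sqrt_sq (by norm_num)]
  have h3 : Real.sqrt 3 ≠ 0 := by positivity
  constructor <;>
  · rw [aX, aB]
    simp only [hb1, hb2, hw1, hw2]
    push_cast
    norm_num [h4, h12]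
    field_simp
    nlinarith [Real.sq_sqrt (show (0:ℝ) ≤ 3 by norm_num), Real.sqrt_nonneg 3]

/-- **Corollary 1, second part.** There is a binary linear code
with exactly two codewords attaining the maximal asymptotic loss under GC1:
its unique pair of distinct codewords satisfies `a^X = (2/√3)·a^B`. -/
theorem loss_bound_attained_by_code :
    ∃ (N : ℕ) (_ : 1 ≤ N) (B : Submodule (ZMod 2) (Fin N → ZMod 2 × ZMod 2)),
      Nat.card B = 2
      ∧ ∀ b ∈ B, ∀ bh ∈ B, b ≠ bh →
          aX (xb GC1 b) (xb GC1 bh) = (2 / Real.sqrt 3) * aB (xb GC1 b) (xb GC1 bh) := by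
  refine ⟨4, by norm_num, Bc, ?_, ?_⟩
  · have h : Nat.card ({0, cwd} : Set (Fin 4 → ZMod 2 × ZMod 2)) = 2 := by
      rw [Nat.card_coe_set_eq, Set.ncard_pair (by decide)]
    exact h
  · intro b hb bh hbh hne
    have hb' : b = 0 ∨ b = cwd := hb
    have hbh' : bh = 0 ∨ bh = cwd := hbh
    rcases hb' with rfl | rfl <;> rcases hbh' with rfl | rfl
    · exact absurd rfl hne
    · exact key.1
    · exact key.2
    · exact absurd rfl hne
end

section
/- (Theorem 5, flat fading.) Let N ≥ 1, let x, x̂ : Fin N → Fin 4 be symbol sequences, and let h : Fin N → ℝ be any channel realization. Define α_h = Σ_{k : (x k, x̂ k) ∈ {(0,3),(3,0)}} (h k)² and β_h = Σ_k (h k)² · b(x k, x̂ k). If β_h > 0, then √(β_h · (β_h + 8·α_h)) ≤ (2/√3) · (β_h + 2·α_h); equivalently, the per-realization asymptotic loss 20 · Real.logb 10 ( √(β_h(β_h+8α_h)) / (β_h+2α_h) ) is at most 1.25 dB. -/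
open Finset

/-- **Theorem 5, flat fading.** For any channel realization `h`,
the per-realization asymptotic loss of the bit-wise decoder is at most 1.25 dB:
with `α_h` the channel-weighted corner count and `β_h` the channel-weighted
error count, `√(β_h(β_h+8α_h)) ≤ (2/√3)(β_h+2α_h)` whenever `β_h > 0`. -/
theorem loss_fading_le (N : ℕ) (hN : 1 ≤ N) (x xh : Fin N → Fin 4)
    (h : Fin N → ℝ)
    (α : ℝ)
    (hα : α = ∑ k ∈ Finset.univ.filter (fun k =>
      (x k, xh k) = ((0 : Fin 4), (3 : Fin 4))
        ∨ (x k, xh k) = ((3 : Fin 4), (0 : Fin 4))), (h k) ^ 2)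
    (β : ℝ) (hβ : β = ∑ k, (h k) ^ 2 * pw (x k) (xh k)) (hβpos : 0 < β) :
    Real.sqrt (β * (β + 8 * α)) ≤ (2 / Real.sqrt 3) * (β + 2 * α)
    ∧ 20 * Real.logb 10 (Real.sqrt (β * (β + 8 * α)) / (β + 2 * α)) ≤ 1.25 := by
  have hα0 : 0 ≤ α := by
    rw [hα]; exact Finset.sum_nonneg fun k _ => sq_nonneg _
  have hs3 : (0:ℝ) < Real.sqrt 3 := Real.sqrt_pos.mpr (by norm_num)
  have hsq3 : (Real.sqrt 3) ^ 2 = 3 := Real.sq_sqrt (by norm_num)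
  have hden : 0 < β + 2 * α := by linarith
  have h1 : Real.sqrt (β * (β + 8 * α)) ≤ (2 / Real.sqrt 3) * (β + 2 * α) := by
    have hle : β * (β + 8 * α) ≤ ((2 / Real.sqrt 3) * (β + 2 * α)) ^ 2 := by
      have : ((2 / Real.sqrt 3) * (β + 2 * α)) ^ 2 = 4 / 3 * (β + 2 * α) ^ 2 := by
        field_simp
        nlinarith [hsq3]
      rw [this]
      nlinarith [sq_nonneg (β - 4 * α)]
    calc Real.sqrt (β * (β + 8 * α)) ≤ Real.sqrt (((2 / Real.sqrt 3) * (β + 2 * α)) ^ 2) :=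
          Real.sqrt_le_sqrt hle
      _ = (2 / Real.sqrt 3) * (β + 2 * α) := Real.sqrt_sq (by positivity)
  refine ⟨h1, ?_⟩
  have hrpos : 0 < Real.sqrt (β * (β + 8 * α)) := Real.sqrt_pos.mpr (by nlinarith)
  set r := Real.sqrt (β * (β + 8 * α)) / (β + 2 * α) with hr
  have hrle : r ≤ 2 / Real.sqrt 3 := by
    rw [hr, div_le_iff₀ hden]; exact h1
  have hr0 : 0 < r := by positivity
  have hlog1 : Real.logb 10 r ≤ Real.logb 10 (2 / Real.sqrt 3) :=
    Real.logb_le_logb_of_le (by norm_num) hr0 hrle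
  have hc2 : (2 / Real.sqrt 3) ^ 2 = 4 / 3 := by
    field_simp
    nlinarith [hsq3]
  have hc16 : (2 / Real.sqrt 3) ^ 16 = (4 / 3 : ℝ) ^ 8 := by
    rw [show (16:ℕ) = 2 * 8 from rfl, pow_mul, hc2]
  have hlog2 : Real.logb 10 ((2 / Real.sqrt 3) ^ 16) ≤ 1 := by
    rw [hc16]
    calc Real.logb 10 ((4/3:ℝ)^8) ≤ Real.logb 10 10 :=
          Real.logb_le_logb_of_le (by norm_num) (by positivity) (by norm_num)
      _ = 1 := Real.logb_self_eq_one (by norm_num)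
  rw [Real.logb_pow] at hlog2
  have : Real.logb 10 (2 / Real.sqrt 3) ≤ 1 / 16 := by
    push_cast at hlog2; linarith
  norm_num
  linarith
end
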